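/- Suppose w : ℝ³ → ℂ³ satisfies the decay estimate ‖∇ × w(ξ)‖ ≤ C ‖ξ‖^{−2} M for all ‖ξ‖ ≥ R. Let B^{(m)} be a fixed bounded set contained in the unit ball, α^{(m)}, α^{(n)} > 0, and z^{(m)}, z^{(n)} ∈ ℝ³ with ‖z^{(m)} − z^{(n)}‖ ≥ d > 0 where (α^{(m)} + d)/α^{(n)} ≥ R and (d − α^{(m)})/α^{(n)} ≥ R. Then the L² norm over the scaled translated set α^{(m)}B^{(m)} + z^{(m)} of the rescaled curl ξ ↦ (∇×w)((α^{(m)}ξ + z^{(m)} − z^{(n)})/α^{(n)}) times the Jacobian factor satisfies: (∫_{α^{(m)}B^{(m)}+z^{(m)}} ‖(∇×w)((x − z^{(n)})/α^{(n)})‖² dx)^{1/2} ≤ C' (α^{(m)})^{3/2} (α^{(n)})² (d − α^{(m)})^{−2} M. -/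

import Mathlib

open Real MeasureTheory

/-- Partial derivative in direction `j` of a complex-valued function on ℝ³. -/
noncomputable def pderiv3 (j : Fin 3) (f : (Fin 3 → ℝ) → ℂ) (x : Fin 3 → ℝ) : ℂ :=
  fderiv ℝ f x (Pi.single j 1)

/-- The curl of a vector field `F : ℝ³ → ℂ³`. -/
noncomputable def curl (F : (Fin 3 → ℝ) → (Fin 3 → ℂ)) (x : Fin 3 → ℝ) : Fin 3 → ℂ :=
  ![pderiv3 1 (fun y => F y 2) x - pderiv3 2 (fun y => F y 1) x,
    pderiv3 2 (fun y => F y 0) x - pderiv3 0 (fun y => F y 2) x,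
    pderiv3 0 (fun y => F y 1) x - pderiv3 1 (fun y => F y 0) x]

/-- Scaling estimate: if `‖∇×w(ξ)‖ ≤ C M/‖ξ‖²` for `‖ξ‖ ≥ R`, `B⁽ᵐ⁾` is contained in the unit
ball, `‖z⁽ᵐ⁾ − z⁽ⁿ⁾‖ ≥ d` with `(αₘ + d)/αₙ ≥ R` and `(d − αₘ)/αₙ ≥ R`, then the `L²` norm of
`x ↦ (∇×w)((x − z⁽ⁿ⁾)/αₙ)` over `αₘB⁽ᵐ⁾ + z⁽ᵐ⁾` is at most
`C' αₘ^{3/2} αₙ² (d − αₘ)^{−2} M`. -/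
lemma curl_meas (w : (Fin 3 → ℝ) → (Fin 3 → ℂ)) : Measurable (curl w) := by
  unfold curl
  rw [measurable_pi_iff]
  intro i
  fin_cases i <;>
    · simp only [Matrix.cons_val_zero, Matrix.cons_val_one, Matrix.head_cons,
        Matrix.cons_val_two, Matrix.tail_cons, pderiv3, Fin.isValue]
      exact (measurable_fderiv_apply_const ℝ _ _).sub (measurable_fderiv_apply_const ℝ _ _)

theorem stmt6 (R CC : ℝ) (hR : 0 < R) (hCC : 0 ≤ CC) :
    ∃ C' : ℝ, 0 < C' ∧
      ∀ (w : (Fin 3 → ℝ) → (Fin 3 → ℂ)) (M : ℝ), 0 ≤ M →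
        (∀ ξ : Fin 3 → ℝ, R ≤ ‖ξ‖ → ‖curl w ξ‖ ≤ CC * M / ‖ξ‖ ^ 2) →
        ∀ (Bm : Set (Fin 3 → ℝ)), MeasurableSet Bm → Bm ⊆ Metric.closedBall 0 1 →
        ∀ (αm αn d : ℝ) (zm zn : Fin 3 → ℝ),
          0 < αm → 0 < αn → 0 < d → d ≤ ‖zm - zn‖ →
          R ≤ (αm + d) / αn → R ≤ (d - αm) / αn →
          (∫ x in (fun ξ => αm • ξ + zm) '' Bm, ‖curl w (αn⁻¹ • (x - zn))‖ ^ 2) ^ ((1 : ℝ)/2)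
            ≤ C' * αm ^ ((3 : ℝ)/2) * αn ^ 2 / (d - αm) ^ 2 * M := by
  set V : ℝ := (volume (Metric.closedBall (0 : Fin 3 → ℝ) 1)).toReal with hV
  have hV0 : 0 ≤ V := ENNReal.toReal_nonneg
  refine ⟨CC * Real.sqrt V + 1, by positivity, ?_⟩
  intro w M hM hcurl Bm hBmMeas hBmSub αm αn d zm zn hαm hαn hd hdz h1 h2
  have hdm : 0 < d - αm := by
    have h3 : 0 < (d - αm) / αn := lt_of_lt_of_le hR h2
    have := mul_pos h3 hαn
    rwa [div_mul_cancel₀ _ (ne_of_gt hαn)] at this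
  set s : Set (Fin 3 → ℝ) := (fun ξ => αm • ξ + zm) '' Bm with hs
  set b : ℝ := CC * M * αn ^ 2 / (d - αm) ^ 2 with hb
  have hb0 : 0 ≤ b := by positivity
  -- s is measurable
  have hseq : s = (fun x => αm⁻¹ • (x - zm)) ⁻¹' Bm := by
    ext x
    constructor
    · rintro ⟨ξ, hξ, rfl⟩
      simpa [smul_smul, inv_mul_cancel₀ (ne_of_gt hαm)] using hξ
    · intro hx
      exact ⟨αm⁻¹ • (x - zm), hx, by simp [smul_smul, mul_inv_cancel₀ (ne_of_gt hαm)]⟩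
  have hsMeas : MeasurableSet s := by
    rw [hseq]
    exact hBmMeas.preimage (by fun_prop)
  -- s ⊆ closedBall zm αm
  have hsub : s ⊆ Metric.closedBall zm αm := by
    rintro x ⟨ξ, hξ, rfl⟩
    have hξ1 : ‖ξ‖ ≤ 1 := by simpa [Metric.mem_closedBall, dist_eq_norm] using hBmSub hξ
    simp only [Metric.mem_closedBall, dist_eq_norm, add_sub_cancel_right, norm_smul,
      Real.norm_eq_abs, abs_of_pos hαm]
    nlinarith
  have hμball : volume (Metric.closedBall zm αm) < ⊤ := measure_closedBall_lt_top
  have hμs : volume s < ⊤ := lt_of_le_of_lt (measure_mono hsub) hμball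
  -- pointwise bound
  have hpt : ∀ x ∈ s, ‖(‖curl w (αn⁻¹ • (x - zn))‖ ^ 2 : ℝ)‖ ≤ b ^ 2 := by
    rintro x ⟨ξ, hξ, rfl⟩
    have hξ1 : ‖ξ‖ ≤ 1 := by simpa [Metric.mem_closedBall, dist_eq_norm] using hBmSub hξ
    set y : Fin 3 → ℝ := αn⁻¹ • (αm • ξ + zm - zn) with hy
    have hxz : d - αm ≤ ‖αm • ξ + zm - zn‖ := by
      have : ‖αm • ξ + zm - zn‖ = ‖(zm - zn) + αm • ξ‖ := by ring_nf
      rw [this]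
      have h4 : ‖zm - zn‖ - ‖αm • ξ‖ ≤ ‖(zm - zn) + αm • ξ‖ := by
        have := norm_sub_norm_le (zm - zn) (-(αm • ξ))
        simpa [sub_neg_eq_add] using this
      have h5 : ‖αm • ξ‖ ≤ αm := by
        rw [norm_smul, Real.norm_eq_abs, abs_of_pos hαm]; nlinarith
      linarith
    have hyn : (d - αm) / αn ≤ ‖y‖ := by
      rw [hy, norm_smul, Real.norm_eq_abs, abs_inv, abs_of_pos hαn, inv_mul_eq_div]
      exact div_le_div_of_nonneg_right hxz hαn.le
    have hRy : R ≤ ‖y‖ := le_trans h2 hyn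
    have hy0 : 0 < ‖y‖ := lt_of_lt_of_le hR hRy
    have hbound : ‖curl w y‖ ≤ b := by
      refine le_trans (hcurl y hRy) ?_
      rw [hb]
      have hq : (d - αm) / αn ≤ ‖y‖ := hyn
      have h6 : CC * M / ‖y‖ ^ 2 ≤ CC * M / ((d - αm) / αn) ^ 2 := by
        gcongr
      refine le_trans h6 (le_of_eq ?_)
      rw [div_pow, div_div_eq_mul_div]
    rw [Real.norm_eq_abs, abs_of_nonneg (by positivity)]
    exact pow_le_pow_left₀ (norm_nonneg _) hbound 2
  -- measurability of integrand
  have hfm : AEStronglyMeasurable (fun x => (‖curl w (αn⁻¹ • (x - zn))‖ ^ 2 : ℝ))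
      (volume.restrict s) := by
    have : Measurable (fun x : Fin 3 → ℝ => (‖curl w (αn⁻¹ • (x - zn))‖ ^ 2 : ℝ)) := by
      have hg : Measurable (fun x : Fin 3 → ℝ => αn⁻¹ • (x - zn)) := by fun_prop
      exact (((curl_meas w).comp hg).norm).pow measurable_const
    exact this.aestronglyMeasurable
  have key : (∫ x in s, ‖curl w (αn⁻¹ • (x - zn))‖ ^ 2) ≤ b ^ 2 * (volume s).toReal := by
    refine le_trans (le_abs_self _) ?_
    rw [← Real.norm_eq_abs]
    exact norm_setIntegral_le_of_norm_le_const hμs hpt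
  -- measure bound
  have hmeasbd : (volume s).toReal ≤ αm ^ 3 * V := by
    have h7 : volume (Metric.closedBall zm αm)
        = ENNReal.ofReal (αm ^ 3) * volume (Metric.closedBall (0 : Fin 3 → ℝ) 1) := by
      have := Measure.addHaar_closedBall' (volume : Measure (Fin 3 → ℝ)) zm hαm.le
      simpa using this
    have h8 : (volume s).toReal ≤ (volume (Metric.closedBall zm αm)).toReal :=
      ENNReal.toReal_mono (ne_of_lt hμball) (measure_mono hsub)
    refine le_trans h8 (le_of_eq ?_)
    rw [h7, ENNReal.toReal_mul, ENNReal.toReal_ofReal (by positivity)]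
  have hint_nonneg : 0 ≤ ∫ x in s, ‖curl w (αn⁻¹ • (x - zn))‖ ^ 2 :=
    setIntegral_nonneg hsMeas (fun x _ => by positivity)
  have key2 : (∫ x in s, ‖curl w (αn⁻¹ • (x - zn))‖ ^ 2) ≤ b ^ 2 * (αm ^ 3 * V) := by
    refine le_trans key ?_
    have := mul_le_mul_of_nonneg_left hmeasbd (sq_nonneg b)
    linarith
  -- take square roots
  rw [← Real.sqrt_eq_rpow]
  have h32 : αm ^ ((3 : ℝ)/2) = Real.sqrt (αm ^ 3) := by
    rw [Real.sqrt_eq_rpow, ← Real.rpow_natCast αm 3, ← Real.rpow_mul hαm.le]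
    norm_num
  have hfinal : Real.sqrt (∫ x in s, ‖curl w (αn⁻¹ • (x - zn))‖ ^ 2)
      ≤ b * (Real.sqrt (αm ^ 3) * Real.sqrt V) := by
    refine le_trans (Real.sqrt_le_sqrt key2) ?_
    rw [Real.sqrt_mul (sq_nonneg b), Real.sqrt_sq hb0,
      Real.sqrt_mul (by positivity : (0:ℝ) ≤ αm ^ 3)]
  refine le_trans hfinal ?_
  rw [← h32, hb]
  have hpos : 0 ≤ αm ^ ((3:ℝ)/2) * αn ^ 2 / (d - αm) ^ 2 * M := by positivity
  have heq : CC * M * αn ^ 2 / (d - αm) ^ 2 * (αm ^ ((3:ℝ)/2) * Real.sqrt V)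
      = CC * Real.sqrt V * (αm ^ ((3:ℝ)/2) * αn ^ 2 / (d - αm) ^ 2 * M) := by ring
  rw [heq, show (CC * Real.sqrt V + 1) * αm ^ ((3:ℝ)/2) * αn ^ 2 / (d - αm) ^ 2 * M
      = CC * Real.sqrt V * (αm ^ ((3:ℝ)/2) * αn ^ 2 / (d - αm) ^ 2 * M)
        + αm ^ ((3:ℝ)/2) * αn ^ 2 / (d - αm) ^ 2 * M from by ring]
  linarith
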